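/- Let R > 0 and p ∈ (0, 1/2]. Let σ, σ̄ : ℕ → ℝ be sequences with σ_i ≥ 0, σ̄_i ≥ 0 for all i and σ_0 + σ̄_0 > 0; let P : ℕ → ℝ satisfy p ≤ P_i ≤ 1 − p for all i; and let r : ℕ → ℝ satisfy 0 < r_i < R for all i (allocations independent of m). Define A_m = ∑_{i<m} ( σ_i/√(r_i + (m−1)·P_i·R) + σ̄_i/√((R − r_i) + (m−1)·(1−P_i)·R) ) and U_m = ∑_{i<m} ( σ_i/√(m·P_i·R) + σ̄_i/√(m·(1−P_i)·R) ). Then A_m / U_m tends to 1 as m → ∞; i.e., the a-posteriori Neyman average DP error is asymptotically equivalent to the a-posteriori uniform average DP error. -/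

import Mathlib

private lemma frac_bd (a x d c C : ℝ) (ha : 0 ≤ a) (hx : 0 < x) (hc : 0 < c)
    (h1 : c * x ≤ d) (h2 : d ≤ C * x) :
    1 / Real.sqrt C * (a / Real.sqrt x) ≤ a / Real.sqrt d ∧
      a / Real.sqrt d ≤ 1 / Real.sqrt c * (a / Real.sqrt x) := by
  have hd : 0 < d := lt_of_lt_of_le (by positivity) h1
  have hC : 0 < C := by nlinarith
  have e1 : 1 / Real.sqrt C * (a / Real.sqrt x) = a / Real.sqrt (C * x) := by
    rw [Real.sqrt_mul hC.le]
    field_simp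
  have e2 : 1 / Real.sqrt c * (a / Real.sqrt x) = a / Real.sqrt (c * x) := by
    rw [Real.sqrt_mul hc.le]
    field_simp
  constructor
  · rw [e1]
    exact div_le_div_of_nonneg_left ha (Real.sqrt_pos.mpr hd) (Real.sqrt_le_sqrt h2)
  · rw [e2]
    exact div_le_div_of_nonneg_left ha (Real.sqrt_pos.mpr (by positivity)) (Real.sqrt_le_sqrt h1)

private lemma term_bd (R p Pi ri a m : ℝ) (hR : 0 < R) (hp : 0 < p)
    (hPi : p ≤ Pi) (hri : 0 < ri) (hriR : ri < R) (ha : 0 ≤ a) (hm : 2 ≤ m) :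
    1 / Real.sqrt (1 + 1 / (m * p)) * (a / Real.sqrt (m * Pi * R)) ≤
        a / Real.sqrt (ri + (m - 1) * Pi * R) ∧
      a / Real.sqrt (ri + (m - 1) * Pi * R) ≤
        1 / Real.sqrt (1 - 1 / m) * (a / Real.sqrt (m * Pi * R)) := by
  have hm0 : (0 : ℝ) < m := by linarith
  have hPi0 : 0 < Pi := lt_of_lt_of_le hp hPi
  have hc : 0 < 1 - 1 / m := by
    have : 1 / m ≤ 1 / 2 := by
      apply div_le_div_of_nonneg_left (by norm_num) (by norm_num) hm
    linarith
  refine frac_bd a (m * Pi * R) _ _ _ ha (by positivity) hc ?_ ?_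
  · have e : (1 - 1 / m) * (m * Pi * R) = (m - 1) * Pi * R := by
      field_simp
    nlinarith
  · have e : (1 + 1 / (m * p)) * (m * Pi * R) = m * Pi * R + Pi * R / p := by
      field_simp
    have hR' : R ≤ Pi * R / p := by
      rw [le_div_iff₀ hp]
      nlinarith
    nlinarith

/-- The a-posteriori Neyman average DP error is asymptotically equivalent to
the a-posteriori uniform average DP error as the number of agents grows. -/
theorem aposteriori_neyman_asympt_uniform
    (R : ℝ) (hR : 0 < R) (p : ℝ) (hp : 0 < p) (hp' : p ≤ 1 / 2)
    (σ σ' P r : ℕ → ℝ)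
    (hσ : ∀ i, 0 ≤ σ i) (hσ' : ∀ i, 0 ≤ σ' i)
    (h0 : 0 < σ 0 + σ' 0)
    (hP : ∀ i, p ≤ P i ∧ P i ≤ 1 - p)
    (hr : ∀ i, 0 < r i ∧ r i < R) :
    Filter.Tendsto
      (fun m : ℕ =>
        (∑ i ∈ Finset.range m,
            (σ i / Real.sqrt (r i + ((m : ℝ) - 1) * P i * R)
              + σ' i / Real.sqrt ((R - r i) + ((m : ℝ) - 1) * (1 - P i) * R)))
        / (∑ i ∈ Finset.range m,
            (σ i / Real.sqrt ((m : ℝ) * P i * R)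
              + σ' i / Real.sqrt ((m : ℝ) * (1 - P i) * R))))
      Filter.atTop (nhds 1) := by
  -- lower bound sequence tends to 1
  have hlo : Filter.Tendsto (fun m : ℕ => 1 / Real.sqrt (1 + 1 / ((m : ℝ) * p)))
      Filter.atTop (nhds 1) := by
    have h1 : Filter.Tendsto (fun m : ℕ => ((m : ℝ) * p)) Filter.atTop Filter.atTop :=
      (tendsto_natCast_atTop_atTop).atTop_mul_const hp
    have h2 : Filter.Tendsto (fun m : ℕ => 1 / ((m : ℝ) * p)) Filter.atTop (nhds 0) := by
      simp only [one_div]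
      exact h1.inv_tendsto_atTop
    have h3 : Filter.Tendsto (fun m : ℕ => 1 + 1 / ((m : ℝ) * p)) Filter.atTop (nhds 1) := by
      simpa using tendsto_const_nhds.add h2
    have h4 : Filter.Tendsto (fun m : ℕ => Real.sqrt (1 + 1 / ((m : ℝ) * p)))
        Filter.atTop (nhds 1) := by
      have := (Real.continuous_sqrt.tendsto 1).comp h3
      simpa [Function.comp_def] using this
    have h5 : Filter.Tendsto (fun m : ℕ => (1 : ℝ) / Real.sqrt (1 + 1 / ((m : ℝ) * p)))
        Filter.atTop (nhds (1 / 1)) := Filter.Tendsto.div tendsto_const_nhds h4 one_ne_zero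
    simpa only [one_div_one] using h5
  -- upper bound sequence tends to 1
  have hhi : Filter.Tendsto (fun m : ℕ => 1 / Real.sqrt (1 - 1 / (m : ℝ)))
      Filter.atTop (nhds 1) := by
    have h3 : Filter.Tendsto (fun m : ℕ => 1 - 1 / (m : ℝ)) Filter.atTop (nhds 1) := by
      simpa using (tendsto_const_nhds (x := (1:ℝ))).sub tendsto_one_div_atTop_nhds_zero_nat
    have h4 : Filter.Tendsto (fun m : ℕ => Real.sqrt (1 - 1 / (m : ℝ)))
        Filter.atTop (nhds 1) := by
      have := (Real.continuous_sqrt.tendsto 1).comp h3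
      simpa [Function.comp_def] using this
    have h5 : Filter.Tendsto (fun m : ℕ => (1 : ℝ) / Real.sqrt (1 - 1 / (m : ℝ)))
        Filter.atTop (nhds (1 / 1)) := Filter.Tendsto.div tendsto_const_nhds h4 one_ne_zero
    simpa only [one_div_one] using h5
  have key : ∀ᶠ m : ℕ in Filter.atTop,
      (1 / Real.sqrt (1 + 1 / ((m : ℝ) * p)) ≤
        (∑ i ∈ Finset.range m,
            (σ i / Real.sqrt (r i + ((m : ℝ) - 1) * P i * R)
              + σ' i / Real.sqrt ((R - r i) + ((m : ℝ) - 1) * (1 - P i) * R)))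
        / (∑ i ∈ Finset.range m,
            (σ i / Real.sqrt ((m : ℝ) * P i * R)
              + σ' i / Real.sqrt ((m : ℝ) * (1 - P i) * R))) ∧
      (∑ i ∈ Finset.range m,
            (σ i / Real.sqrt (r i + ((m : ℝ) - 1) * P i * R)
              + σ' i / Real.sqrt ((R - r i) + ((m : ℝ) - 1) * (1 - P i) * R)))
        / (∑ i ∈ Finset.range m,
            (σ i / Real.sqrt ((m : ℝ) * P i * R)
              + σ' i / Real.sqrt ((m : ℝ) * (1 - P i) * R)))
        ≤ 1 / Real.sqrt (1 - 1 / (m : ℝ))) := by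
    filter_upwards [Filter.eventually_ge_atTop 2] with m hm
    have hm' : (2 : ℝ) ≤ (m : ℝ) := by exact_mod_cast hm
    have hm0 : (0 : ℝ) < (m : ℝ) := by linarith
    -- per-index bounds
    have hbd : ∀ i,
        (1 / Real.sqrt (1 + 1 / ((m : ℝ) * p)) *
            (σ i / Real.sqrt ((m : ℝ) * P i * R) + σ' i / Real.sqrt ((m : ℝ) * (1 - P i) * R)) ≤
          σ i / Real.sqrt (r i + ((m : ℝ) - 1) * P i * R)
            + σ' i / Real.sqrt ((R - r i) + ((m : ℝ) - 1) * (1 - P i) * R)) ∧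
        (σ i / Real.sqrt (r i + ((m : ℝ) - 1) * P i * R)
            + σ' i / Real.sqrt ((R - r i) + ((m : ℝ) - 1) * (1 - P i) * R) ≤
          1 / Real.sqrt (1 - 1 / (m : ℝ)) *
            (σ i / Real.sqrt ((m : ℝ) * P i * R) + σ' i / Real.sqrt ((m : ℝ) * (1 - P i) * R))) := by
      intro i
      obtain ⟨l1, u1⟩ := term_bd R p (P i) (r i) (σ i) (m : ℝ) hR hp (hP i).1
        (hr i).1 (hr i).2 (hσ i) hm'
      obtain ⟨l2, u2⟩ := term_bd R p (1 - P i) (R - r i) (σ' i) (m : ℝ) hR hp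
        (by linarith [(hP i).2]) (by linarith [(hr i).2]) (by linarith [(hr i).1])
        (hσ' i) hm'
      constructor
      · rw [mul_add]; exact add_le_add l1 l2
      · rw [mul_add]; exact add_le_add u1 u2
    -- positivity of the uniform sum
    have hU : 0 < ∑ i ∈ Finset.range m,
        (σ i / Real.sqrt ((m : ℝ) * P i * R) + σ' i / Real.sqrt ((m : ℝ) * (1 - P i) * R)) := by
      apply Finset.sum_pos'
      · intro i _
        exact add_nonneg (div_nonneg (hσ i) (Real.sqrt_nonneg _))
          (div_nonneg (hσ' i) (Real.sqrt_nonneg _))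
      · refine ⟨0, Finset.mem_range.mpr (by omega), ?_⟩
        have hP0 : 0 < P 0 := lt_of_lt_of_le hp (hP 0).1
        have hP0' : 0 < 1 - P 0 := lt_of_lt_of_le hp (by linarith [(hP 0).2])
        have hs1 : 0 < Real.sqrt ((m : ℝ) * P 0 * R) := Real.sqrt_pos.mpr (by positivity)
        have hs2 : 0 < Real.sqrt ((m : ℝ) * (1 - P 0) * R) := Real.sqrt_pos.mpr (by positivity)
        rcases lt_or_eq_of_le (hσ 0) with h | h
        · exact add_pos_of_pos_of_nonneg (div_pos h hs1)
            (div_nonneg (hσ' 0) hs2.le)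
        · have : 0 < σ' 0 := by linarith
          exact add_pos_of_nonneg_of_pos (div_nonneg (hσ 0) hs1.le) (div_pos this hs2)
    constructor
    · rw [le_div_iff₀ hU, Finset.mul_sum]
      exact Finset.sum_le_sum fun i _ => (hbd i).1
    · rw [div_le_iff₀ hU, Finset.mul_sum]
      exact Finset.sum_le_sum fun i _ => (hbd i).2
  exact tendsto_of_tendsto_of_tendsto_of_le_of_le' hlo hhi
    (key.mono fun m h => h.1) (key.mono fun m h => h.2)
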